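/- For all natural numbers m and n with 2m ≥ n, one has σ_{m,n} = (2·4^m·(2m−n)!)/(m!·(4m+1)!!)·p_n(m). -/

import Mathlib

open Polynomial Finset

/-- The Pochhammer symbol (rising factorial) `(α)_k`. -/
noncomputable def poch (α : ℝ) (k : ℕ) : ℝ := ∏ i ∈ Finset.range k, (α + i)

/-- The quantity `σ_{m,n}`. -/
noncomputable def sigma (m n : ℕ) : ℝ :=
  ∑ k ∈ Finset.range (m + 1),
    (m.choose k : ℝ) * (k : ℝ) ^ n * (-1) ^ k / poch ((k : ℝ) + 1 / 2) (m + 1)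

/-- The Stirling numbers of the second kind. -/
noncomputable def stirling2 (n k : ℕ) : ℝ :=
  (1 / (Nat.factorial k) : ℝ) *
    ∑ j ∈ Finset.range (k + 1), (k.choose j : ℝ) * (-1) ^ (k - j) * (j : ℝ) ^ n

/-- The polynomial `p_n(m)`. -/
noncomputable def pPoly (n : ℕ) (m : ℝ) : ℝ :=
  ∑ k ∈ Finset.range (n + 1),
    stirling2 n k * poch (-m) k * poch (1 / 2) k * poch (2 * m - n + 1) (n - k)

/-- The odd double factorial `(2j+1)!! = 1·3·5⋯(2j+1)`. -/
noncomputable def oddDF (j : ℕ) : ℝ := ∏ i ∈ Finset.range (j + 1), (2 * (i : ℝ) + 1)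

/-! ### Auxiliary lemmas -/

lemma poch_succ (α : ℝ) (k : ℕ) : poch α (k+1) = poch α k * (α + k) :=
  Finset.prod_range_succ _ _

lemma poch_zero (α : ℝ) : poch α 0 = 1 := rfl

lemma poch_add (α : ℝ) (p q : ℕ) : poch α (p+q) = poch α p * poch (α + p) q := by
  unfold poch
  rw [Finset.prod_range_add]
  congr 1
  refine Finset.prod_congr rfl fun i _ => ?_
  push_cast; ring

lemma poch_pos {α : ℝ} (ha : 0 < α) (k : ℕ) : 0 < poch α k := by
  unfold poch; exact Finset.prod_pos fun i _ => by positivity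

lemma poch_succ' (α : ℝ) (k : ℕ) : poch α (k+1) = α * poch (α+1) k := by
  unfold poch
  rw [Finset.prod_range_succ' (fun i => α + (i:ℝ)) k]
  push_cast
  rw [add_zero, mul_comm]
  congr 1
  exact Finset.prod_congr rfl fun i _ => by ring

lemma fact_mul_poch (q r : ℕ) : (Nat.factorial q : ℝ) * poch ((q:ℝ)+1) r
    = ((Nat.factorial (q+r)) : ℝ) := by
  induction r with
  | zero => simp [poch_zero]
  | succ r ih =>
    rw [poch_succ, ← mul_assoc, ih, show q + (r+1) = (q+r)+1 from rfl, Nat.factorial_succ]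
    push_cast; ring

lemma poch_neg_nat (m j : ℕ) : poch (-(m:ℝ)) j = (-1)^j * (Nat.factorial j : ℝ) * (m.choose j) := by
  induction j with
  | zero => simp [poch_zero]
  | succ j ih =>
    have hc : ((m.choose (j+1) : ℝ)) * ((j:ℝ)+1) = (m.choose j : ℝ) * ((m:ℝ) - j) := by
      rcases lt_or_ge j m with hlt | hle
      · have h := Nat.choose_succ_right_eq m j
        calc ((m.choose (j+1) : ℝ)) * ((j:ℝ)+1) = ((m.choose (j+1) * (j+1) : ℕ) : ℝ) := by
              push_cast; ring
        _ = ((m.choose j * (m - j) : ℕ) : ℝ) := by rw [h]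
        _ = (m.choose j : ℝ) * ((m:ℝ) - j) := by push_cast [Nat.cast_sub hlt.le]; ring
      · rcases eq_or_lt_of_le hle with rfl | hlt
        · simp [Nat.choose_succ_self]
        · rw [Nat.choose_eq_zero_of_lt hlt, Nat.choose_eq_zero_of_lt (by omega)]
          simp
    rw [poch_succ, ih, Nat.factorial_succ]
    push_cast
    linear_combination ((-1:ℝ))^j * (Nat.factorial j) * hc

lemma alt_sum_choose (j : ℕ) :
    ∑ i ∈ range (j+1), (-1:ℝ)^i * (j.choose i) = if j = 0 then 1 else 0 := by
  split_ifs with hj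
  · subst hj; simp
  · have h := Int.alternating_sum_range_choose_of_ne hj
    have h2 : ((∑ m ∈ range (j+1), ((-1)^m * j.choose m : ℤ) : ℤ) : ℝ) = 0 := by
      rw [h]; simp
    push_cast at h2
    exact h2

lemma neg_one_pow_sub {i j : ℕ} (hij : i ≤ j) :
    ((-1:ℝ))^(j-i) = (-1)^j * (-1)^i := by
  have h : ((-1:ℝ))^(j-i) * (-1)^i = (-1)^j := by
    rw [← pow_add, Nat.sub_add_cancel hij]
  have h2 : ((-1:ℝ))^i * (-1)^i = 1 := by
    rw [← pow_add, ← two_mul, pow_mul]; norm_num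
  calc ((-1:ℝ))^(j-i) = ((-1:ℝ))^(j-i) * ((-1:ℝ)^i * (-1)^i) := by rw [h2, mul_one]
  _ = (-1:ℝ)^j * (-1)^i := by rw [← mul_assoc, h]

lemma diff_vanish (n : ℕ) : ∀ j : ℕ, n < j →
    ∑ i ∈ range (j+1), (j.choose i : ℝ) * (-1)^(j-i) * (i:ℝ)^n = 0 := by
  induction n using Nat.strong_induction_on with
  | _ n ih =>
    intro j hj
    match n, ih, hj with
    | 0, _, hj =>
      have e : ∑ i ∈ range (j+1), (j.choose i : ℝ) * (-1)^(j-i) * (i:ℝ)^0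
          = (-1)^j * ∑ i ∈ range (j+1), (-1:ℝ)^i * (j.choose i) := by
        rw [Finset.mul_sum]
        refine Finset.sum_congr rfl fun i hi => ?_
        rw [neg_one_pow_sub (Nat.lt_succ_iff.mp (mem_range.mp hi))]
        ring
      rw [e, alt_sum_choose, if_neg (by omega)]
      ring
    | n+1, ih, hj =>
      obtain ⟨J, rfl⟩ : ∃ J, j = J + 1 := ⟨j - 1, by omega⟩
      have key : ∀ t ∈ range (J+1),
          ((J+1).choose (t+1) : ℝ) * (-1)^((J+1)-(t+1)) * ((t+1:ℕ):ℝ)^(n+1)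
          = ((J:ℝ)+1) * (J.choose t : ℝ) * (-1)^(J-t) * ((t:ℝ)+1)^n := by
        intro t ht
        have hmcR : ((J:ℝ)+1) * (J.choose t : ℝ) = ((J+1).choose (t+1) : ℝ) * ((t:ℝ)+1) := by
          exact_mod_cast congrArg (fun z : ℕ => (z:ℝ)) (Nat.add_one_mul_choose_eq J t)
        have hsub : (J+1) - (t+1) = J - t := by omega
        rw [hsub]
        push_cast
        linear_combination (-((-1:ℝ))^(J-t)) * ((t:ℝ)+1)^n * hmcR
      calc ∑ i ∈ range (J+1+1), ((J+1).choose i : ℝ) * (-1)^((J+1)-i) * (i:ℝ)^(n+1)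
          = ∑ t ∈ range (J+1), ((J+1).choose (t+1) : ℝ) * (-1)^((J+1)-(t+1)) * ((t+1:ℕ):ℝ)^(n+1) := by
            rw [Finset.sum_range_succ']
            simp
        _ = ∑ t ∈ range (J+1), ((J:ℝ)+1) * (J.choose t : ℝ) * (-1)^(J-t) * ((t:ℝ)+1)^n :=
            Finset.sum_congr rfl key
        _ = ∑ t ∈ range (J+1), ∑ s ∈ range (n+1),
              ((J:ℝ)+1) * ((n.choose s : ℝ) * ((J.choose t : ℝ) * (-1)^(J-t) * (t:ℝ)^s)) := by
            refine Finset.sum_congr rfl fun t ht => ?_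
            rw [show ((t:ℝ)+1)^n = ∑ s ∈ range (n+1), (t:ℝ)^s * 1^(n-s) * (n.choose s : ℝ) from
              add_pow (t:ℝ) 1 n, Finset.mul_sum]
            exact Finset.sum_congr rfl fun s _ => by ring
        _ = ∑ s ∈ range (n+1), ((J:ℝ)+1) * (n.choose s : ℝ) *
              ∑ t ∈ range (J+1), (J.choose t : ℝ) * (-1)^(J-t) * (t:ℝ)^s := by
            rw [Finset.sum_comm]
            refine Finset.sum_congr rfl fun s _ => ?_
            rw [Finset.mul_sum]
            exact Finset.sum_congr rfl fun t _ => by ring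
        _ = 0 := by
            refine Finset.sum_eq_zero fun s hs => ?_
            have hs' := mem_range.mp hs
            rw [ih s (by omega) J (by omega), mul_zero]

lemma inversion (n k : ℕ) :
    ((k:ℝ))^n = ∑ j ∈ range (k+1), (k.choose j : ℝ) *
      ∑ i ∈ range (j+1), (j.choose i : ℝ) * (-1)^(j-i) * (i:ℝ)^n := by
  have ext1 : ∀ j ∈ range (k+1),
      (k.choose j : ℝ) * ∑ i ∈ range (j+1), (j.choose i : ℝ) * (-1)^(j-i) * (i:ℝ)^n
      = ∑ i ∈ range (k+1), (k.choose j : ℝ) * ((j.choose i : ℝ) * (-1)^(j-i) * (i:ℝ)^n) := by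
    intro j hj
    have hj' := mem_range.mp hj
    rw [Finset.mul_sum]
    have hsub : range (j+1) ⊆ range (k+1) := Finset.range_subset_range.mpr (by omega)
    refine Finset.sum_subset hsub fun i _ hi => ?_
    have hji : j < i := by simp only [mem_range, not_lt] at hi; omega
    rw [Nat.choose_eq_zero_of_lt hji]
    push_cast; ring
  rw [Finset.sum_congr rfl ext1, Finset.sum_comm]
  have inner : ∀ i ∈ range (k+1),
      ∑ j ∈ range (k+1), (k.choose j : ℝ) * ((j.choose i : ℝ) * (-1)^(j-i) * (i:ℝ)^n)
      = (if i = k then (i:ℝ)^n else 0) := by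
    intro i hi
    have hik : i ≤ k := Nat.lt_succ_iff.mp (mem_range.mp hi)
    rw [show k + 1 = i + ((k - i) + 1) by omega, Finset.sum_range_add]
    have z1 : ∑ j ∈ range i, (k.choose j : ℝ) * ((j.choose i : ℝ) * (-1)^(j-i) * (i:ℝ)^n) = 0 := by
      refine Finset.sum_eq_zero fun j hj => ?_
      rw [Nat.choose_eq_zero_of_lt (mem_range.mp hj)]
      push_cast; ring
    rw [z1, zero_add]
    have e2 : ∀ d ∈ range ((k-i)+1),
        (k.choose (i+d) : ℝ) * (((i+d).choose i : ℝ) * (-1)^((i+d)-i) * (i:ℝ)^n)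
        = (k.choose i : ℝ) * ((i:ℝ)^n) * ((-1)^d * ((k-i).choose d : ℝ)) := by
      intro d hd
      have hd' : d ≤ k - i := Nat.lt_succ_iff.mp (mem_range.mp hd)
      have h1 : k.choose (i+d) * (i+d).choose i = k.choose i * (k-i).choose ((i+d)-i) :=
        Nat.choose_mul (by omega)
      have h1R : (k.choose (i+d) : ℝ) * ((i+d).choose i : ℝ)
          = (k.choose i : ℝ) * ((k-i).choose d : ℝ) := by
        have := congrArg (fun z : ℕ => (z:ℝ)) h1
        push_cast at this
        simpa [Nat.add_sub_cancel_left] using this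
      rw [Nat.add_sub_cancel_left]
      linear_combination ((-1:ℝ))^d * (i:ℝ)^n * h1R
    rw [Finset.sum_congr rfl e2, ← Finset.mul_sum, alt_sum_choose]
    have e3 : (if k - i = 0 then (1:ℝ) else 0) = (if i = k then 1 else 0) := by
      split_ifs with h1 h2 h3 <;> first | rfl | omega
    rw [e3]
    split_ifs with h
    · subst h; simp
    · ring
  rw [Finset.sum_congr rfl inner, Finset.sum_ite_eq' (range (k+1)) k (fun i => (i:ℝ)^n)]
  simp

lemma sumBeta (m : ℕ) : ∀ (M : ℕ) (a : ℝ), 0 < a →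
    ∑ i ∈ range (M+1), (M.choose i : ℝ) * (-1)^i / poch (a+i) (m+1)
    = (Nat.factorial (m+M) : ℝ) / ((Nat.factorial m : ℝ) * poch a (m+M+1)) := by
  intro M
  induction M with
  | zero =>
    intro a ha
    have h1 : (Nat.factorial m : ℝ) ≠ 0 := by positivity
    have h2 : poch a (m+1) ≠ 0 := (poch_pos ha _).ne'
    simp only [Finset.sum_range_one, Nat.choose_self, Nat.cast_one, Nat.cast_zero, add_zero,
      pow_zero, Nat.add_zero]
    field_simp
    simp [h2]
  | succ M ih =>
    intro a ha
    set f' : ℕ → ℝ := fun j => (M.choose j : ℝ) * (-1)^j / poch (a+j) (m+1) with hf'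
    set g' : ℕ → ℝ := fun i => (M.choose i : ℝ) * (-1)^i / poch ((a+1)+i) (m+1) with hg'
    have step : ∑ i ∈ range (M+1+1), ((M+1).choose i : ℝ) * (-1)^i / poch (a+i) (m+1)
        = (∑ j ∈ range (M+1), f' j) - ∑ i ∈ range (M+1), g' i := by
      rw [Finset.sum_range_succ'
        (fun i => ((M+1).choose i : ℝ) * (-1)^i / poch (a+(i:ℕ)) (m+1)) (M+1)]
      have e1 : ∀ i ∈ range (M+1),
          ((M+1).choose (i+1) : ℝ) * (-1)^(i+1) / poch (a+((i+1:ℕ):ℝ)) (m+1)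
          = f' (i+1) - g' i := by
        intro i hi
        have hc : ((M+1).choose (i+1) : ℝ) = (M.choose i : ℝ) + (M.choose (i+1) : ℝ) := by
          push_cast [Nat.choose_succ_succ]; ring
        have hsh : poch (a+((i+1:ℕ):ℝ)) (m+1) = poch ((a+1)+(i:ℝ)) (m+1) := by
          congr 1; push_cast; ring
        simp only [hf', hg']
        rw [hc, hsh]
        ring
      rw [Finset.sum_congr rfl e1, Finset.sum_sub_distrib]
      have hshift : ∑ i ∈ range (M+1), f' (i+1) = (∑ j ∈ range (M+1), f' j) - f' 0 := by
        have h2 : ∑ j ∈ range (M+1+1), f' j = ∑ i ∈ range (M+1), f' (i+1) + f' 0 :=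
          Finset.sum_range_succ' f' (M+1)
        have h3 : ∑ j ∈ range (M+1+1), f' j = ∑ j ∈ range (M+1), f' j := by
          rw [Finset.sum_range_succ]
          have hz : f' (M+1) = 0 := by
            simp only [hf']
            rw [Nat.choose_eq_zero_of_lt (Nat.lt_succ_self M)]
            push_cast; ring
          rw [hz, add_zero]
        rw [h3] at h2
        linarith
      have hf0 : f' 0 = 1 / poch (a+(0:ℕ)) (m+1) := by
        simp only [hf']; norm_num
      rw [hshift]
      have hc0 : ((M+1).choose 0 : ℝ) * (-1)^0 / poch (a+((0:ℕ):ℝ)) (m+1)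
          = 1 / poch (a+(0:ℕ)) (m+1) := by norm_num
      rw [hc0, hf0]
      ring
    rw [step, ih a ha, ih (a+1) (by linarith)]
    have hQ : (0:ℝ) < poch (a+1) (m+M) := poch_pos (by linarith) _
    have hA : poch a (m+M+1) = a * poch (a+1) (m+M) := poch_succ' a (m+M)
    have hB : poch (a+1) (m+M+1) = poch (a+1) (m+M) * ((a+1) + (m+M : ℕ)) :=
      poch_succ (a+1) (m+M)
    have hC : poch a (m+(M+1)+1) = a * (poch (a+1) (m+M) * ((a+1) + (m+M : ℕ))) := by
      rw [show m+(M+1)+1 = (m+M+1)+1 by omega, poch_succ' a (m+M+1), hB]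
    have hD : (Nat.factorial (m+(M+1)) : ℝ) = (Nat.factorial (m+M) : ℝ) * ((m+M : ℕ) + 1) := by
      rw [show m+(M+1) = (m+M)+1 by omega, Nat.factorial_succ]
      push_cast; ring
    have hm : (Nat.factorial m : ℝ) ≠ 0 := by positivity
    have ha' : a ≠ 0 := ha.ne'
    have hQ' : poch (a+1) (m+M) ≠ 0 := hQ.ne'
    have hE : (a+1) + ((m+M : ℕ):ℝ) ≠ 0 := by positivity
    rw [hA, hB, hC, hD]
    field_simp
    ring

lemma fact_mul_stirling2 (n j : ℕ) : (Nat.factorial j : ℝ) * stirling2 n j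
    = ∑ i ∈ range (j+1), (j.choose i : ℝ) * (-1)^(j-i) * (i:ℝ)^n := by
  unfold stirling2
  have hj : (Nat.factorial j : ℝ) ≠ 0 := by positivity
  rw [← mul_assoc, mul_one_div, div_self hj, one_mul]

lemma oddDF_eq (j : ℕ) : oddDF j = 2^(j+1) * poch (1/2) (j+1) := by
  unfold oddDF
  calc ∏ i ∈ range (j+1), (2*(i:ℝ)+1)
      = ∏ i ∈ range (j+1), (2:ℝ) * ((1/2:ℝ) + i) := Finset.prod_congr rfl fun i _ => by ring
  _ = (∏ _i ∈ range (j+1), (2:ℝ)) * ∏ i ∈ range (j+1), ((1/2:ℝ) + i) :=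
      Finset.prod_mul_distrib
  _ = 2^(j+1) * poch (1/2) (j+1) := by rw [Finset.prod_const, Finset.card_range]; rfl

theorem stmt5 (m n : ℕ) (h : 2 * m ≥ n) :
    sigma m n =
      2 * 4 ^ m * (Nat.factorial (2 * m - n)) / ((Nat.factorial m) * oddDF (2 * m)) *
        pPoly n (m : ℝ) := by
  set A : ℕ → ℝ := fun j => stirling2 n j * poch (-(m:ℝ)) j * poch (1/2) j *
      (Nat.factorial (2*m - j) : ℝ) / ((Nat.factorial m : ℝ) * poch (1/2) (2*m+1)) with hA
  have hQpos : (0:ℝ) < poch (1/2) (2*m+1) := poch_pos (by norm_num) _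
  have hmf : (Nat.factorial m : ℝ) ≠ 0 := by positivity
  -- the inner alternating sum
  have hInner : ∀ j, j ≤ m →
      ∑ k ∈ range (m+1), (m.choose k : ℝ)*(k.choose j : ℝ)*(-1)^k / poch ((k:ℝ)+1/2) (m+1)
      = (m.choose j : ℝ) * (-1)^j * (Nat.factorial (2*m-j) : ℝ)
          / ((Nat.factorial m : ℝ) * poch ((j:ℝ)+1/2) ((2*m-j)+1)) := by
    intro j hj
    have hsum := Finset.sum_range_add
      (fun k => (m.choose k : ℝ)*(k.choose j : ℝ)*(-1)^k / poch ((k:ℝ)+1/2) (m+1))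
      j ((m-j)+1)
    rw [show j + ((m-j)+1) = m+1 by omega] at hsum
    rw [hsum]
    have z1 : ∑ k ∈ range j, (m.choose k : ℝ)*(k.choose j : ℝ)*(-1)^k
        / poch ((k:ℝ)+1/2) (m+1) = 0 :=
      Finset.sum_eq_zero fun k hk => by
        rw [Nat.choose_eq_zero_of_lt (mem_range.mp hk)]; simp
    rw [z1, zero_add]
    have e2 : ∀ i ∈ range ((m-j)+1),
        (m.choose (j+i) : ℝ)*((j+i).choose j : ℝ)*(-1)^(j+i) / poch (((j+i:ℕ):ℝ)+1/2) (m+1)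
        = ((m.choose j : ℝ) * (-1)^j) *
            (((m-j).choose i : ℝ) * (-1)^i / poch (((j:ℝ)+1/2)+i) (m+1)) := by
      intro i hi
      have hi' : i ≤ m - j := Nat.lt_succ_iff.mp (mem_range.mp hi)
      have h1 : m.choose (j+i) * (j+i).choose j = m.choose j * (m-j).choose i := by
        have := Nat.choose_mul (n := m) (show j ≤ j+i by omega)
        simpa [Nat.add_sub_cancel_left] using this
      have h1R : (m.choose (j+i) : ℝ) * ((j+i).choose j : ℝ)
          = (m.choose j : ℝ) * ((m-j).choose i : ℝ) := by
        exact_mod_cast congrArg (fun z : ℕ => (z:ℝ)) h1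
      have harg : (((j+i:ℕ):ℝ)+1/2) = ((j:ℝ)+1/2)+(i:ℝ) := by push_cast; ring
      rw [harg, pow_add]
      linear_combination ((-1:ℝ))^j * (-1)^i / poch (((j:ℝ)+1/2)+(i:ℝ)) (m+1) * h1R
    rw [Finset.sum_congr rfl e2, ← Finset.mul_sum,
      sumBeta m (m-j) ((j:ℝ)+1/2) (by positivity)]
    rw [show m + (m-j) = 2*m - j by omega]
    ring
  -- left-hand side
  have hL : sigma m n = ∑ j ∈ range (m+1), A j := by
    have hexp : ∀ k ∈ range (m+1), ((k:ℝ))^n = ∑ j ∈ range (m+1), (k.choose j : ℝ) *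
        ∑ i ∈ range (j+1), (j.choose i : ℝ) * (-1)^(j-i) * (i:ℝ)^n := by
      intro k hk
      have hk' := mem_range.mp hk
      rw [inversion n k]
      have hsub : range (k+1) ⊆ range (m+1) := Finset.range_subset_range.mpr (by omega)
      refine Finset.sum_subset hsub fun j _ hj => ?_
      have hkj : k < j := by simp only [mem_range, not_lt] at hj; omega
      rw [Nat.choose_eq_zero_of_lt hkj]
      simp
    unfold sigma
    calc ∑ k ∈ range (m+1), (m.choose k : ℝ) * (k:ℝ)^n * (-1)^k / poch ((k:ℝ)+1/2) (m+1)
        = ∑ k ∈ range (m+1), ∑ j ∈ range (m+1),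
            (∑ i ∈ range (j+1), (j.choose i : ℝ) * (-1)^(j-i) * (i:ℝ)^n) *
              ((m.choose k : ℝ) * (k.choose j : ℝ) * (-1)^k / poch ((k:ℝ)+1/2) (m+1)) := by
          refine Finset.sum_congr rfl fun k hk => ?_
          rw [hexp k hk, Finset.mul_sum, Finset.sum_mul, Finset.sum_div]
          exact Finset.sum_congr rfl fun j _ => by ring
      _ = ∑ j ∈ range (m+1),
            (∑ i ∈ range (j+1), (j.choose i : ℝ) * (-1)^(j-i) * (i:ℝ)^n) *
            ∑ k ∈ range (m+1),
              (m.choose k : ℝ) * (k.choose j : ℝ) * (-1)^k / poch ((k:ℝ)+1/2) (m+1) := by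
          rw [Finset.sum_comm]
          exact Finset.sum_congr rfl fun j _ => by rw [Finset.mul_sum]
      _ = ∑ j ∈ range (m+1), A j := by
          refine Finset.sum_congr rfl fun j hj => ?_
          have hj' : j ≤ m := Nat.lt_succ_iff.mp (mem_range.mp hj)
          rw [hInner j hj', ← fact_mul_stirling2]
          have hsplit : poch (1/2) (2*m+1) = poch (1/2) j * poch ((j:ℝ)+1/2) ((2*m-j)+1) := by
            have e := poch_add (1/2) j ((2*m-j)+1)
            rw [show j + ((2*m-j)+1) = 2*m+1 by omega] at e
            rw [e]
            congr 2
            ring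
          have hpj : (0:ℝ) < poch ((j:ℝ)+1/2) ((2*m-j)+1) := poch_pos (by positivity) _
          have hhj : (0:ℝ) < poch (1/2) j := poch_pos (by norm_num) _
          simp only [hA]
          rw [poch_neg_nat, hsplit]
          set P := poch ((j:ℝ)+1/2) ((2*m-j)+1) with hPdef
          set H := poch (1/2) j with hHdef
          have hP0 : P ≠ 0 := hpj.ne'
          have hH0 : H ≠ 0 := hhj.ne'
          field_simp
  -- right-hand side
  have hR : 2 * 4 ^ m * ((Nat.factorial (2 * m - n)) : ℝ) /
        ((Nat.factorial m : ℝ) * oddDF (2 * m)) * pPoly n (m:ℝ)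
      = ∑ k ∈ range (n+1), A k := by
    unfold pPoly
    rw [Finset.mul_sum]
    refine Finset.sum_congr rfl fun k hk => ?_
    have hk' : k ≤ n := Nat.lt_succ_iff.mp (mem_range.mp hk)
    have harg : 2 * (m:ℝ) - n + 1 = ((2*m - n : ℕ):ℝ) + 1 := by
      push_cast [Nat.cast_sub h]; ring
    have hfp := fact_mul_poch (2*m-n) (n-k)
    rw [show (2*m-n) + (n-k) = 2*m-k by omega] at hfp
    rw [← harg] at hfp
    simp only [hA]
    rw [oddDF_eq]
    have h2 : (2:ℝ) * 4^m = 2^(2*m+1) := by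
      rw [show (4:ℝ) = 2^2 by norm_num, ← pow_mul, pow_succ]
      ring
    have hp2 : (2:ℝ)^(2*m+1) ≠ 0 := by positivity
    rw [h2]
    field_simp
    linear_combination (stirling2 n k * poch (-(m:ℝ)) k * poch (1/2) k) * hfp
  -- vanishing of extra terms
  have hAz1 : ∀ j, m < j → A j = 0 := by
    intro j hj
    simp only [hA]
    rw [poch_neg_nat, Nat.choose_eq_zero_of_lt hj]
    simp
  have hAz2 : ∀ j, n < j → A j = 0 := by
    intro j hj
    have hs : stirling2 n j = 0 := by
      unfold stirling2
      rw [diff_vanish n j hj, mul_zero]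
    simp only [hA, hs]
    simp
  have hfin : ∑ j ∈ range (m+1), A j = ∑ j ∈ range (n+1), A j := by
    have e1 : ∑ j ∈ range (m+1), A j = ∑ j ∈ range (m+n+2), A j :=
      Finset.sum_subset (Finset.range_subset_range.mpr (by omega)) fun j _ hj =>
        hAz1 j (by simp only [mem_range, not_lt] at hj; omega)
    have e2 : ∑ j ∈ range (n+1), A j = ∑ j ∈ range (m+n+2), A j :=
      Finset.sum_subset (Finset.range_subset_range.mpr (by omega)) fun j _ hj =>
        hAz2 j (by simp only [mem_range, not_lt] at hj; omega)
    rw [e1, e2]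
  rw [hL, hfin, ← hR]
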